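/- Fix an integer D ≥ 2 and 0 < λ < λ_D. Then the sequence (p_h) defined by p_1 = 1 and p_{h+1} = ψ_D(λ p_h) is nonincreasing and converges to 0 as h → ∞; moreover there exist constants 0 < a ≤ b and an integer h_0 such that for all h ≥ h_0: exp(−b·D^h) ≤ p_h ≤ exp(−a·D^h). -/

import Mathlib

open scoped Classical BigOperators
open Filter

namespace PlantedStructures

/-- A graph on vertex set `[n]`. -/
abbrev Graph (n : ℕ) := SimpleGraph (Fin n)

/-- Number of edges of a graph on `[n]`. -/
noncomputable def edgeCount {n : ℕ} (G : Graph n) : ℕ := G.edgeSet.ncard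

/-- The Erdős–Rényi probability `ℙ0(G)` of an individual graph `G` on `[n]`,
with edge probability `p`. -/
noncomputable def P0 (n : ℕ) (p : ℝ) (G : Graph n) : ℝ :=
  p ^ edgeCount G * (1 - p) ^ (n.choose 2 - edgeCount G)

/-- Probability of an event under `ℙ0`. -/
noncomputable def Pr0 (n : ℕ) (p : ℝ) (A : Graph n → Prop) : ℝ :=
  ∑ G : Graph n, if A G then P0 n p G else 0

/-- Expectation of a functional of the graph under `ℙ0`. -/
noncomputable def E0 (n : ℕ) (p : ℝ) (f : Graph n → ℝ) : ℝ :=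
  ∑ G : Graph n, P0 n p G * f G

/-- The probability `ℙ1(G)` of an individual graph `G` on `[n]` under the planted
distribution: `G = G0 ⊔ σ(Γ)` where `G0 ~ G(n,p)` and `σ` is a uniformly random
injection of the vertices of `Γ` into `[n]`, independent of `G0`. -/
noncomputable def P1 (n : ℕ) (p : ℝ) {V : Type*} [Fintype V] (Γ : SimpleGraph V)
    (G : Graph n) : ℝ :=
  (∑ σ : V ↪ Fin n, ∑ G0 : Graph n, if G0 ⊔ Γ.map σ = G then P0 n p G0 else 0) /
    (Fintype.card (V ↪ Fin n) : ℝ)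

/-- Probability of a joint event of the planted injection `σ` and the observed
graph `G = G0 ⊔ σ(Γ)`, under the planted distribution. -/
noncomputable def PrJoint (n : ℕ) (p : ℝ) {V : Type*} [Fintype V] (Γ : SimpleGraph V)
    (A : (V ↪ Fin n) → Graph n → Prop) : ℝ :=
  (∑ σ : V ↪ Fin n, ∑ G0 : Graph n, if A σ (G0 ⊔ Γ.map σ) then P0 n p G0 else 0) /
    (Fintype.card (V ↪ Fin n) : ℝ)

/-- Probability of an event under the planted distribution `ℙ1`. -/
noncomputable def Pr1 (n : ℕ) (p : ℝ) {V : Type*} [Fintype V] (Γ : SimpleGraph V)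
    (A : Graph n → Prop) : ℝ :=
  PrJoint n p Γ (fun _ G => A G)

/-- The likelihood ratio `L(G) = ℙ1(G) / ℙ0(G)`. -/
noncomputable def LR (n : ℕ) (p : ℝ) {V : Type*} [Fintype V] (Γ : SimpleGraph V)
    (G : Graph n) : ℝ :=
  P1 n p Γ G / P0 n p G

/-- The number of copies of `Γ` in `G`, i.e. of subgraphs of `G` isomorphic to `Γ`. -/
noncomputable def numCopies {V : Type*} (Γ : SimpleGraph V) {n : ℕ} (G : Graph n) : ℕ :=
  Set.ncard {H : G.Subgraph | Nonempty (H.coe ≃g Γ)}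

/-- Total variation distance between `ℙ1` and `ℙ0`. -/
noncomputable def dTV (n : ℕ) (p : ℝ) {V : Type*} [Fintype V] (Γ : SimpleGraph V) : ℝ :=
  (∑ G : Graph n, |P1 n p Γ G - P0 n p G|) / 2

/-- The planted vertex set `𝒦 = σ([K])`. -/
noncomputable def plantedSet {n : ℕ} {V : Type*} [Fintype V] (σ : V ↪ Fin n) :
    Finset (Fin n) :=
  Finset.univ.map σ

/-- The overlap `ov(K̂) = Σ_{i ∈ [n]} ℙ1(i ∈ K̂(G) ∩ 𝒦)` of an estimator `K̂`. -/
noncomputable def overlap (n : ℕ) (p : ℝ) {V : Type*} [Fintype V] (Γ : SimpleGraph V)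
    (kHat : Graph n → Finset (Fin n)) : ℝ :=
  (∑ σ : V ↪ Fin n, ∑ G0 : Graph n,
      P0 n p G0 * ((kHat (G0 ⊔ Γ.map σ) ∩ plantedSet σ).card : ℝ)) /
    (Fintype.card (V ↪ Fin n) : ℝ)


/-- The star graph with `K` edges: vertex `0` is the center, joined to the `K` leaves. -/
def starGraph (K : ℕ) : SimpleGraph (Fin (K + 1)) :=
  SimpleGraph.fromRel (fun i _ => i = 0)

/-- `inPathEdge K u v` states that `{u, v}` is an edge of the fixed path
`(1 − 2 − ⋯ − K)` on the first `K` vertices of `[n]`. -/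
def inPathEdge (K : ℕ) {n : ℕ} (u v : Fin n) : Prop :=
  u.val < K ∧ v.val < K ∧ (u.val + 1 = v.val ∨ v.val + 1 = u.val)

/-- The number of ordered `K`-paths in `G`: ordered tuples of `K` distinct vertices
in which consecutive vertices are adjacent in `G`. -/
noncomputable def numOrderedPaths (n K : ℕ) (G : Graph n) : ℕ :=
  Set.ncard {f : Fin K ↪ Fin n |
    ∀ (i : ℕ) (h : i + 1 < K), G.Adj (f ⟨i, Nat.lt_of_succ_lt h⟩) (f ⟨i + 1, h⟩)}

/-- The number `S` of edges that the ordered `K`-path `f` has in common with the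
fixed path `(1 − 2 − ⋯ − K)`. -/
noncomputable def commonEdges (n K : ℕ) (f : Fin K ↪ Fin n) : ℕ :=
  ((Finset.range K).filter (fun i =>
    ∃ h : i + 1 < K, inPathEdge K (f ⟨i, Nat.lt_of_succ_lt h⟩) (f ⟨i + 1, h⟩))).card

/-- The number of indices `1 ≤ t ≤ m` with `Z_t = 1`, i.e. `Σ_{t=1}^m Z_t⁺`, for the
random path given by the injection `f`. -/
noncomputable def zPlusSum (n K m : ℕ) (f : Fin K ↪ Fin n) : ℕ :=
  ((Finset.range m).filter (fun i =>
    ∃ h : i + 1 < K, inPathEdge K (f ⟨i, Nat.lt_of_succ_lt h⟩) (f ⟨i + 1, h⟩))).card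

/-- `z⁺` for the three states `−1, 0, 1` (encoded as `0, 1, 2 : Fin 3`). -/
def statePlus : Fin 3 → ℕ := ![0, 0, 1]

/-- Initial distribution of the Markov chain `Z′`:
`ℙ(Z′_1 = 1) = (K/n′)(2/n′)`, `ℙ(Z′_1 ≥ 0) = K/n′`, where `n′ = n − K`. -/
noncomputable def chainInit (n K : ℕ) : Fin 3 → ℝ :=
  ![1 - K / ((n : ℝ) - K),
    K / ((n : ℝ) - K) - 2 * K / ((n : ℝ) - K) ^ 2,
    2 * K / ((n : ℝ) - K) ^ 2]

/-- Transition matrix of the Markov chain `Z′` on states `−1, 0, 1`. -/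
noncomputable def chainTrans (n K : ℕ) : Fin 3 → Fin 3 → ℝ :=
  ![![1 - K / ((n : ℝ) - K), K / ((n : ℝ) - K), 0],
    ![1 - K / ((n : ℝ) - K), ((K : ℝ) - 2) / ((n : ℝ) - K), 2 / ((n : ℝ) - K)],
    ![1 - K / ((n : ℝ) - K), ((K : ℝ) - 1) / ((n : ℝ) - K), 1 / ((n : ℝ) - K)]]

/-- `chainF n K x t s = E[x^{Σ_{u=1}^{t+1} Z′_u⁺} ⬝ 1{Z′_{t+1} = s}]`. -/
noncomputable def chainF (n K : ℕ) (x : ℝ) : ℕ → Fin 3 → ℝ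
  | 0 => fun s => chainInit n K s * x ^ statePlus s
  | (t + 1) => fun s =>
      (∑ s' : Fin 3, chainF n K x t s' * chainTrans n K s' s) * x ^ statePlus s

/-- `E[x^{Σ_{t=1}^m Z′_t⁺}]` for the Markov chain `Z′`. -/
noncomputable def chainExp (n K : ℕ) (x : ℝ) (m : ℕ) : ℝ :=
  ∑ s : Fin 3, chainF n K x (m - 1) s

/-- `ψ_D(μ) = ℙ(Poisson(μ) ≥ D)`. -/
noncomputable def psi (D : ℕ) (μ : ℝ) : ℝ :=
  1 - ∑ j ∈ Finset.range D, Real.exp (-μ) * μ ^ j / (Nat.factorial j)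

/-- `p*(D,λ)`: the largest nonnegative root of `p = ψ_D(λ p)`. -/
noncomputable def pstar (D : ℕ) (lam : ℝ) : ℝ :=
  sSup {p : ℝ | 0 ≤ p ∧ p = psi D (lam * p)}

/-- `λ_D = sup{λ > 0 : p*(D,λ) = 0}`, the threshold for emergence of the `D`-core. -/
noncomputable def lambdaD (D : ℕ) : ℝ :=
  sSup {lam : ℝ | 0 < lam ∧ pstar D lam = 0}

/-- The sequence `p_h` (for `h ≥ 1`): `p_1 = 1`, `p_{h+1} = ψ_D(λ p_h)`. -/
noncomputable def pseq (D : ℕ) (lam : ℝ) : ℕ → ℝ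
  | 0 => 1
  | 1 => 1
  | (h + 2) => psi D (lam * pseq D lam (h + 1))

/-- `h̄(n) = inf{h ≥ 1 : p_h < 1/n}`. -/
noncomputable def hbar (D : ℕ) (lam : ℝ) (n : ℕ) : ℕ :=
  sInf {h : ℕ | 1 ≤ h ∧ pseq D lam h < 1 / n}

/-- `h̲(n) = sup{h ≥ 1 : p_h > ln(n)/n}`. -/
noncomputable def hlow (D : ℕ) (lam : ℝ) (n : ℕ) : ℕ :=
  sSup {h : ℕ | 1 ≤ h ∧ Real.log n / n < pseq D lam h}

/-- The vertex type of the complete `D`-ary tree of height `h`: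
`D^ℓ` vertices at each depth `0 ≤ ℓ ≤ h`. -/
abbrev DaryVertex (D h : ℕ) : Type := Σ ℓ : Fin (h + 1), Fin (D ^ (ℓ : ℕ))

/-- The complete `D`-ary tree of height `h`: every vertex at depth `ℓ < h` has exactly
`D` children; the vertex `m` at depth `ℓ + 1` has parent `m / D` at depth `ℓ`. -/
def daryTree (D h : ℕ) : SimpleGraph (DaryVertex D h) :=
  SimpleGraph.fromRel (fun u v =>
    (u.1 : ℕ) + 1 = (v.1 : ℕ) ∧ (v.2 : ℕ) / D = (u.2 : ℕ))

/-- Neighbourhood of a vertex, as a `Finset`. -/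
noncomputable def nbhd {n : ℕ} (G : Graph n) (v : Fin n) : Finset (Fin n) :=
  Finset.univ.filter (fun w => G.Adj v w)

/-- `v` is a vertex of maximal degree in `G`. -/
def isMaxDegVertex {n : ℕ} (G : Graph n) (v : Fin n) : Prop :=
  ∀ w : Fin n, (nbhd G w).card ≤ (nbhd G v).card

/-- Degree of `v` inside the vertex set `S` (for the peeling operation). -/
noncomputable def degIn {n : ℕ} (G : Graph n) (S : Finset (Fin n)) (v : Fin n) : ℕ :=
  (S.filter (fun w => G.Adj v w)).card

/-- One peeling operation: remove from `S` all vertices of degree one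
(in the subgraph of `G` induced on `S`). -/
noncomputable def peel {n : ℕ} (G : Graph n) (S : Finset (Fin n)) : Finset (Fin n) :=
  S.filter (fun v => degIn G S v ≠ 1)

/-- The vertex set of a connected component, as a `Finset`. -/
noncomputable def componentFinset {n : ℕ} (G : Graph n) (c : G.ConnectedComponent) :
    Finset (Fin n) :=
  Finset.univ.filter (fun w => G.connectedComponentMk w = c)

/-- The set `S` contains a longest path of `G`. -/
def containsLongestPath {n : ℕ} (G : Graph n) (S : Finset (Fin n)) : Prop :=
  ∃ (u v : Fin n) (p : G.Walk u v), p.IsPath ∧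
    (∀ (u' v' : Fin n) (q : G.Walk u' v'), q.IsPath → q.length ≤ p.length) ∧
    (∀ w ∈ p.support, w ∈ S)


/-- The proportion `I_Γ` of ordered pairs of copies of `Γ` in `G` whose vertex sets
intersect (set to `0` when `G` contains no copy of `Γ`). -/
noncomputable def IGamma {V : Type*} (Γ : SimpleGraph V) {n : ℕ} (G : Graph n) : ℝ :=
  if numCopies Γ G = 0 then 0
  else
    (Set.ncard {H : G.Subgraph × G.Subgraph |
        Nonempty (H.1.coe ≃g Γ) ∧ Nonempty (H.2.coe ≃g Γ) ∧ (H.1.verts ∩ H.2.verts).Nonempty} : ℝ)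
      / (numCopies Γ G : ℝ) ^ 2

/-- The overlap of the randomized star estimator which outputs the max-degree vertex
`vstar G` together with `K` of its neighbours chosen uniformly at random:
`Σ_i ℙ1(i ∈ K̂(G) ∩ 𝒦)`, averaging over the planted injection `σ`, the graph `G0` and
the uniformly random `K`-subset of neighbours. -/
noncomputable def starEstOverlap (n K : ℕ) (p : ℝ) (vstar : Graph n → Fin n) : ℝ :=
  (∑ σ : Fin (K + 1) ↪ Fin n, ∑ G0 : Graph n, P0 n p G0 *
      ((if vstar (G0 ⊔ (starGraph K).map σ) ∈ plantedSet σ then (1 : ℝ) else 0) +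
        (∑ S ∈ (nbhd (G0 ⊔ (starGraph K).map σ)
              (vstar (G0 ⊔ (starGraph K).map σ))).powersetCard K,
            ((S ∩ plantedSet σ).card : ℝ)) /
          (((nbhd (G0 ⊔ (starGraph K).map σ)
              (vstar (G0 ⊔ (starGraph K).map σ))).powersetCard K).card : ℝ))) /
    (Fintype.card (Fin (K + 1) ↪ Fin n) : ℝ)


/-! ### Basic facts about `psi` -/

lemma real_exp_tsum (x : ℝ) : Real.exp x = ∑' n : ℕ, x ^ n / (Nat.factorial n) := by
  rw [Real.exp_eq_exp_ℝ, NormedSpace.exp_eq_tsum_div]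

lemma psi_eq_tsum (D : ℕ) (μ : ℝ) :
    psi D μ = Real.exp (-μ) * ∑' j : ℕ, μ ^ (j + D) / (Nat.factorial (j + D)) := by
  have hsum := Summable.sum_add_tsum_nat_add (f := fun n => μ ^ n / (Nat.factorial n)) D
    (Real.summable_pow_div_factorial μ)
  have h1 : ∑ j ∈ Finset.range D, Real.exp (-μ) * μ ^ j / (Nat.factorial j)
      = Real.exp (-μ) * ∑ j ∈ Finset.range D, μ ^ j / (Nat.factorial j) := by
    rw [Finset.mul_sum]; exact Finset.sum_congr rfl fun j _ => by ring
  have h2 : (∑' j : ℕ, μ ^ (j + D) / (Nat.factorial (j + D)))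
      = Real.exp μ - ∑ j ∈ Finset.range D, μ ^ j / (Nat.factorial j) := by
    rw [real_exp_tsum]; linarith [hsum]
  rw [psi, h1, h2, mul_sub, ← Real.exp_add]
  simp

lemma tail_summable (D : ℕ) (μ : ℝ) :
    Summable (fun j : ℕ => μ ^ (j + D) / (Nat.factorial (j + D))) :=
  (summable_nat_add_iff D).mpr (Real.summable_pow_div_factorial μ)

lemma psi_nonneg (D : ℕ) {μ : ℝ} (hμ : 0 ≤ μ) : 0 ≤ psi D μ := by
  rw [psi_eq_tsum]
  have : 0 ≤ ∑' j : ℕ, μ ^ (j + D) / (Nat.factorial (j + D)) :=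
    tsum_nonneg fun j => by positivity
  positivity

lemma psi_le_one (D : ℕ) {μ : ℝ} (hμ : 0 ≤ μ) : psi D μ ≤ 1 := by
  have : 0 ≤ ∑ j ∈ Finset.range D, Real.exp (-μ) * μ ^ j / (Nat.factorial j) :=
    Finset.sum_nonneg fun j _ => by positivity
  rw [psi]; linarith

lemma psi_ge (D : ℕ) {μ : ℝ} (hμ : 0 ≤ μ) :
    Real.exp (-μ) * μ ^ D / (Nat.factorial D) ≤ psi D μ := by
  rw [psi_eq_tsum]
  have h0 : μ ^ D / (Nat.factorial D) ≤ ∑' j : ℕ, μ ^ (j + D) / (Nat.factorial (j + D)) := by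
    have := Summable.le_tsum (tail_summable D μ) 0 (fun j _ => by positivity)
    simpa using this
  have he : (0:ℝ) < Real.exp (-μ) := Real.exp_pos _
  calc Real.exp (-μ) * μ ^ D / (Nat.factorial D)
      = Real.exp (-μ) * (μ ^ D / (Nat.factorial D)) := by ring
    _ ≤ Real.exp (-μ) * ∑' j : ℕ, μ ^ (j + D) / (Nat.factorial (j + D)) := by
        exact mul_le_mul_of_nonneg_left h0 he.le

lemma psi_pos (D : ℕ) {μ : ℝ} (hμ : 0 < μ) : 0 < psi D μ :=
  lt_of_lt_of_le (by positivity) (psi_ge D hμ.le)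

lemma psi_le (D : ℕ) {μ : ℝ} (hμ : 0 ≤ μ) : psi D μ ≤ μ ^ D / (Nat.factorial D) := by
  rw [psi_eq_tsum]
  have hterm : ∀ j : ℕ, μ ^ (j + D) / (Nat.factorial (j + D))
      ≤ μ ^ D / (Nat.factorial D) * (μ ^ j / (Nat.factorial j)) := by
    intro j
    have hdvd : (Nat.factorial D) * (Nat.factorial j) ≤ Nat.factorial (j + D) := by
      have := Nat.factorial_mul_factorial_dvd_factorial_add D j
      rw [add_comm j D]
      exact Nat.le_of_dvd (Nat.factorial_pos _) this
    have h1 : μ ^ (j + D) / (Nat.factorial (j + D)) ≤ μ ^ (j + D) / ((Nat.factorial D) * (Nat.factorial j)) := by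
      apply div_le_div_of_nonneg_left (by positivity) (by positivity)
      exact_mod_cast hdvd
    calc μ ^ (j + D) / (Nat.factorial (j + D))
        ≤ μ ^ (j + D) / ((Nat.factorial D) * (Nat.factorial j)) := h1
      _ = μ ^ D / (Nat.factorial D) * (μ ^ j / (Nat.factorial j)) := by
          rw [pow_add]; ring
  have hsum : (∑' j : ℕ, μ ^ (j + D) / (Nat.factorial (j + D)))
      ≤ μ ^ D / (Nat.factorial D) * Real.exp μ := by
    calc (∑' j : ℕ, μ ^ (j + D) / (Nat.factorial (j + D)))
        ≤ ∑' j : ℕ, μ ^ D / (Nat.factorial D) * (μ ^ j / (Nat.factorial j)) :=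
          Summable.tsum_le_tsum hterm (tail_summable D μ)
            ((Real.summable_pow_div_factorial μ).mul_left _)
      _ = μ ^ D / (Nat.factorial D) * ∑' j : ℕ, μ ^ j / (Nat.factorial j) := tsum_mul_left
      _ = μ ^ D / (Nat.factorial D) * Real.exp μ := by rw [real_exp_tsum]
  have he : (0:ℝ) < Real.exp (-μ) := Real.exp_pos _
  calc Real.exp (-μ) * ∑' j : ℕ, μ ^ (j + D) / (Nat.factorial (j + D))
      ≤ Real.exp (-μ) * (μ ^ D / (Nat.factorial D) * Real.exp μ) :=
        mul_le_mul_of_nonneg_left hsum he.le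
    _ = μ ^ D / (Nat.factorial D) * (Real.exp (-μ) * Real.exp μ) := by ring
    _ = μ ^ D / (Nat.factorial D) := by rw [← Real.exp_add]; simp

lemma continuous_psi (D : ℕ) : Continuous (psi D) := by
  unfold psi
  fun_prop

/-! ### Derivative and monotonicity -/

lemma hasDerivAt_term (j : ℕ) (μ : ℝ) :
    HasDerivAt (fun x : ℝ => Real.exp (-x) * x ^ j / (Nat.factorial j))
      ((-Real.exp (-μ) * μ ^ j + Real.exp (-μ) * (j * μ ^ (j - 1))) / (Nat.factorial j)) μ := by
  have h1 : HasDerivAt (fun x : ℝ => Real.exp (-x)) (-Real.exp (-μ)) μ := by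
    simpa [Function.comp_def] using (Real.hasDerivAt_exp (-μ)).comp μ (hasDerivAt_neg μ)
  have h2 := hasDerivAt_pow j μ
  simpa using (h1.mul h2).div_const ((Nat.factorial j : ℝ))

lemma deriv_sum_identity (μ : ℝ) (d : ℕ) :
    ∑ j ∈ Finset.range (d + 1),
        (-Real.exp (-μ) * μ ^ j + Real.exp (-μ) * (j * μ ^ (j - 1))) / (Nat.factorial j)
      = -(Real.exp (-μ) * μ ^ d / (Nat.factorial d)) := by
  induction d with
  | zero => simp
  | succ n ih =>
    rw [Finset.sum_range_succ, ih]
    have hfac : ((Nat.factorial (n + 1)) : ℝ) = (n + 1) * (Nat.factorial n) := by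
      rw [Nat.factorial_succ]; push_cast; ring
    have hne : ((Nat.factorial n) : ℝ) ≠ 0 := by
      exact_mod_cast (Nat.factorial_pos n).ne'
    have hns : ((n:ℝ) + 1) ≠ 0 := by positivity
    rw [hfac]
    have hj : ((n + 1 : ℕ) : ℝ) = (n:ℝ) + 1 := by push_cast; ring
    have hjs : (n + 1) - 1 = n := by omega
    rw [hjs, hj]
    field_simp
    ring

lemma hasDerivAt_psi (D : ℕ) (hD : 1 ≤ D) (μ : ℝ) :
    HasDerivAt (psi D) (Real.exp (-μ) * μ ^ (D - 1) / (Nat.factorial (D - 1))) μ := by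
  obtain ⟨d, rfl⟩ : ∃ d, D = d + 1 := ⟨D - 1, (Nat.succ_pred_eq_of_pos hD).symm⟩
  have hsum : HasDerivAt
      (fun x : ℝ => ∑ j ∈ Finset.range (d + 1), Real.exp (-x) * x ^ j / (Nat.factorial j))
      (∑ j ∈ Finset.range (d + 1),
        (-Real.exp (-μ) * μ ^ j + Real.exp (-μ) * (j * μ ^ (j - 1))) / (Nat.factorial j)) μ :=
    HasDerivAt.fun_sum fun j _ => hasDerivAt_term j μ
  have h := (hasDerivAt_const μ (1:ℝ)).fun_sub hsum
  rw [deriv_sum_identity] at h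
  have hd1 : d + 1 - 1 = d := by omega
  rw [hd1]
  have : (fun x : ℝ => (1:ℝ) - ∑ j ∈ Finset.range (d + 1), Real.exp (-x) * x ^ j / (Nat.factorial j))
      = psi (d + 1) := rfl
  rw [this] at h
  simpa using h

lemma psi_monotoneOn (D : ℕ) (hD : 1 ≤ D) : MonotoneOn (psi D) (Set.Ici 0) := by
  apply monotoneOn_of_deriv_nonneg (convex_Ici 0) (continuous_psi D).continuousOn
  · intro x _
    exact (hasDerivAt_psi D hD x).differentiableAt.differentiableWithinAt
  · intro x hx
    rw [(hasDerivAt_psi D hD x).deriv]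
    rw [interior_Ici] at hx
    have hx0 : (0:ℝ) ≤ x := le_of_lt hx
    positivity

lemma psi_zero (D : ℕ) (hD : 1 ≤ D) : psi D 0 = 0 := by
  obtain ⟨d, rfl⟩ : ∃ d, D = d + 1 := ⟨D - 1, (Nat.succ_pred_eq_of_pos hD).symm⟩
  rw [psi, Finset.sum_range_succ']
  simp

variable {D : ℕ} {lam : ℝ}

lemma pseq_succ_eq (D : ℕ) (lam : ℝ) {h : ℕ} (hh : 1 ≤ h) :
    pseq D lam (h + 1) = psi D (lam * pseq D lam h) := by
  obtain ⟨k, rfl⟩ : ∃ k, h = k + 1 := ⟨h - 1, by omega⟩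
  rfl

lemma pseq_pos (hD : 1 ≤ D) (hlam : 0 < lam) : ∀ h, 0 < pseq D lam h := by
  intro h
  induction h using Nat.strong_induction_on with
  | _ h ih =>
    match h with
    | 0 => exact one_pos
    | 1 => exact one_pos
    | (k + 2) =>
      have hk := ih (k + 1) (by omega)
      exact psi_pos D (by positivity)

lemma pseq_le_one (hD : 1 ≤ D) (hlam : 0 < lam) : ∀ h, pseq D lam h ≤ 1 := by
  intro h
  match h with
  | 0 => exact le_refl 1
  | 1 => exact le_refl 1
  | (k + 2) =>
    have hk := pseq_pos hD hlam (k + 1)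
    exact psi_le_one D (by positivity)

lemma pseq_succ_le (hD : 1 ≤ D) (hlam : 0 < lam) :
    ∀ h, pseq D lam (h + 1) ≤ pseq D lam h := by
  intro h
  induction h with
  | zero => exact le_refl 1
  | succ n ih =>
    have e : pseq D lam (n + 2) = psi D (lam * pseq D lam (n + 1)) := rfl
    have hb : psi D (lam * pseq D lam n) ≤ pseq D lam (n + 1) := by
      match n with
      | 0 =>
        have : pseq D lam 1 = 1 := rfl
        rw [this]
        exact psi_le_one D (by have := pseq_pos hD hlam 0; positivity)
      | (k + 1) => exact le_of_eq rfl
    calc pseq D lam (n + 2) = psi D (lam * pseq D lam (n + 1)) := e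
      _ ≤ psi D (lam * pseq D lam n) := by
          apply psi_monotoneOn D hD
          · exact Set.mem_Ici.mpr (by have := pseq_pos hD hlam (n + 1); positivity)
          · exact Set.mem_Ici.mpr (by have := pseq_pos hD hlam n; positivity)
          · exact mul_le_mul_of_nonneg_left ih hlam.le
      _ ≤ pseq D lam (n + 1) := hb

lemma pseq_antitone (hD : 1 ≤ D) (hlam : 0 < lam) : Antitone (pseq D lam) :=
  antitone_nat_of_succ_le (pseq_succ_le hD hlam)

/-! ### `pstar` vanishes below the threshold -/

lemma fixedSet_bddAbove (D : ℕ) {lam : ℝ} (hlam : 0 ≤ lam) :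
    BddAbove {p : ℝ | 0 ≤ p ∧ p = psi D (lam * p)} := by
  refine ⟨1, fun p hp => ?_⟩
  obtain ⟨hp0, hpe⟩ := hp
  rw [hpe]
  exact psi_le_one D (by positivity)

lemma zero_mem_fixedSet (D : ℕ) (hD : 1 ≤ D) (lam : ℝ) :
    (0:ℝ) ∈ {p : ℝ | 0 ≤ p ∧ p = psi D (lam * p)} := by
  constructor
  · exact le_refl 0
  · rw [mul_zero, psi_zero D hD]

lemma pstar_nonneg (D : ℕ) (hD : 1 ≤ D) {lam : ℝ} (hlam : 0 ≤ lam) : 0 ≤ pstar D lam :=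
  le_csSup (fixedSet_bddAbove D hlam) (zero_mem_fixedSet D hD lam)

/-- If `pstar D lam' = 0` and `0 < lam ≤ lam'`, then `pstar D lam = 0`. -/
lemma pstar_eq_zero_of_le (D : ℕ) (hD : 1 ≤ D) {lam lam' : ℝ} (hlam : 0 < lam)
    (hle : lam ≤ lam') (h' : pstar D lam' = 0) : pstar D lam = 0 := by
  by_contra hne
  have hpos : 0 < pstar D lam := lt_of_le_of_ne (pstar_nonneg D hD hlam.le) (Ne.symm hne)
  obtain ⟨p, hp, hp0⟩ := exists_lt_of_lt_csSup ⟨0, zero_mem_fixedSet D hD lam⟩ hpos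
  obtain ⟨hpnn, hpe⟩ := hp
  have hlam' : 0 < lam' := lt_of_lt_of_le hlam hle
  have hp1 : p ≤ 1 := by rw [hpe]; exact psi_le_one D (by positivity)
  -- `psi D (lam' * p) ≥ p` and `psi D (lam' * 1) ≤ 1`; IVT gives a fixed point in `[p,1]`.
  set g : ℝ → ℝ := fun x => psi D (lam' * x) - x with hg
  have hgc : ContinuousOn g (Set.Icc p 1) :=
    (((continuous_psi D).comp (continuous_const.mul continuous_id)).sub continuous_id).continuousOn
  have hgp : 0 ≤ g p := by
    have hmono : psi D (lam * p) ≤ psi D (lam' * p) := by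
      apply psi_monotoneOn D hD
      · exact Set.mem_Ici.mpr (by positivity)
      · exact Set.mem_Ici.mpr (by positivity)
      · exact mul_le_mul_of_nonneg_right hle hpnn
    have : p ≤ psi D (lam' * p) := le_trans (le_of_eq hpe) hmono
    simpa [hg] using sub_nonneg.mpr this
  have hg1 : g 1 ≤ 0 := by
    have : psi D (lam' * 1) ≤ 1 := psi_le_one D (by positivity)
    simpa [hg] using sub_nonpos.mpr this
  have hmem : (0:ℝ) ∈ Set.Icc (g 1) (g p) := ⟨hg1, hgp⟩
  obtain ⟨q, hq, hgq⟩ := intermediate_value_Icc' hp1 hgc hmem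
  have hqfix : q = psi D (lam' * q) := by
    have : psi D (lam' * q) - q = 0 := hgq
    linarith
  have hq0 : 0 ≤ q := le_trans hpnn hq.1
  have hqle : q ≤ pstar D lam' :=
    le_csSup (fixedSet_bddAbove D hlam'.le) ⟨hq0, hqfix⟩
  rw [h'] at hqle
  have : 0 < q := lt_of_lt_of_le hp0 hq.1
  linarith

lemma pstar_eq_zero (D : ℕ) (hD : 1 ≤ D) {lam : ℝ} (hlam : 0 < lam)
    (hsub : lam < lambdaD D) : pstar D lam = 0 := by
  have hS : {l : ℝ | 0 < l ∧ pstar D l = 0}.Nonempty := by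
    by_contra hne
    rw [Set.not_nonempty_iff_eq_empty] at hne
    have : lambdaD D = 0 := by rw [lambdaD, hne, Real.sSup_empty]
    rw [this] at hsub
    linarith
  obtain ⟨l', hl', hlt⟩ := exists_lt_of_lt_csSup hS hsub
  exact pstar_eq_zero_of_le D hD hlam hlt.le hl'.2

lemma pseq_tendsto_zero {D : ℕ} (hD2 : 2 ≤ D) {lam : ℝ} (hlam : 0 < lam)
    (hsub : lam < lambdaD D) :
    Filter.Tendsto (pseq D lam) Filter.atTop (nhds 0) := by
  have hD : 1 ≤ D := by omega
  have hbdd : BddBelow (Set.range (pseq D lam)) := by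
    refine ⟨0, ?_⟩
    rintro x ⟨h, rfl⟩
    exact (pseq_pos hD hlam h).le
  have hconv : Filter.Tendsto (pseq D lam) Filter.atTop (nhds (⨅ h, pseq D lam h)) :=
    tendsto_atTop_ciInf (pseq_antitone hD hlam) hbdd
  set L := ⨅ h, pseq D lam h with hL
  have hL0 : 0 ≤ L := le_ciInf fun h => (pseq_pos hD hlam h).le
  have hfix : L = psi D (lam * L) := by
    have h1 : Filter.Tendsto (fun h => pseq D lam (h + 1)) Filter.atTop (nhds L) :=
      hconv.comp (Filter.tendsto_add_atTop_nat 1)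
    have h2 : Filter.Tendsto (fun h => psi D (lam * pseq D lam h)) Filter.atTop
        (nhds (psi D (lam * L))) := by
      have hcont : Continuous (fun x : ℝ => psi D (lam * x)) :=
        (continuous_psi D).comp (continuous_const.mul continuous_id)
      exact (hcont.tendsto L).comp hconv
    have heq : (fun h => pseq D lam (h + 1)) =ᶠ[Filter.atTop]
        (fun h => psi D (lam * pseq D lam h)) :=
      Filter.eventually_atTop.mpr ⟨1, fun h hh => pseq_succ_eq D lam hh⟩
    exact tendsto_nhds_unique (h1.congr' heq) h2
  have hle : L ≤ pstar D lam := le_csSup (fixedSet_bddAbove D hlam.le) ⟨hL0, hfix⟩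
  rw [pstar_eq_zero D hD hlam hsub] at hle
  have hL00 : L = 0 := le_antisymm hle hL0
  rwa [hL00] at hconv


/-- for `D ≥ 2` and `0 < λ < λ_D`, the sequence `p_h` is nonincreasing,
converges to `0`, and satisfies `exp(−b D^h) ≤ p_h ≤ exp(−a D^h)` for all large `h`. -/
theorem statement_13 (D : ℕ) (hD : 2 ≤ D) (lam : ℝ) (hlam : 0 < lam)
    (hsub : lam < lambdaD D) :
    (∀ h : ℕ, 1 ≤ h → pseq D lam (h + 1) ≤ pseq D lam h) ∧
    Tendsto (pseq D lam) atTop (nhds 0) ∧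
    ∃ (a b : ℝ) (h₀ : ℕ), 0 < a ∧ a ≤ b ∧ 1 ≤ h₀ ∧
      ∀ h : ℕ, h₀ ≤ h →
        Real.exp (-(b * (D : ℝ) ^ h)) ≤ pseq D lam h ∧
        pseq D lam h ≤ Real.exp (-(a * (D : ℝ) ^ h)) := by
  have hD1 : 1 ≤ D := by omega
  have hDR : (2:ℝ) ≤ (D:ℝ) := by exact_mod_cast hD
  have hDm1 : (0:ℝ) < (D:ℝ) - 1 := by linarith
  have hPpos : ∀ h, 0 < pseq D lam h := pseq_pos hD1 hlam
  have hPle1 : ∀ h, pseq D lam h ≤ 1 := pseq_le_one hD1 hlam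
  have htend : Tendsto (pseq D lam) atTop (nhds 0) := pseq_tendsto_zero hD hlam hsub
  refine ⟨fun h hh => pseq_succ_le hD1 hlam h, htend, ?_⟩
  -- recursion bounds
  have hfac1 : (1:ℝ) ≤ (Nat.factorial D : ℝ) := by exact_mod_cast (Nat.factorial_pos D)
  have hup : ∀ h, 1 ≤ h → pseq D lam (h + 1) ≤ lam ^ D * pseq D lam h ^ D := by
    intro h hh
    rw [pseq_succ_eq D lam hh]
    have hμ : 0 ≤ lam * pseq D lam h := by have := hPpos h; positivity
    calc psi D (lam * pseq D lam h) ≤ (lam * pseq D lam h) ^ D / (Nat.factorial D) :=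
          psi_le D hμ
      _ ≤ (lam * pseq D lam h) ^ D := div_le_self (by positivity) hfac1
      _ = lam ^ D * pseq D lam h ^ D := mul_pow _ _ _
  set cL : ℝ := Real.exp (-lam) * lam ^ D / (Nat.factorial D) with hcLdef
  have hcLpos : 0 < cL := by positivity
  have hlow : ∀ h, 1 ≤ h → cL * pseq D lam h ^ D ≤ pseq D lam (h + 1) := by
    intro h hh
    rw [pseq_succ_eq D lam hh]
    have hp := hPpos h
    have hμ : 0 ≤ lam * pseq D lam h := by positivity
    have h2 : Real.exp (-lam) ≤ Real.exp (-(lam * pseq D lam h)) := by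
      apply Real.exp_le_exp.mpr
      have : lam * pseq D lam h ≤ lam * 1 := mul_le_mul_of_nonneg_left (hPle1 h) hlam.le
      linarith
    calc cL * pseq D lam h ^ D
        = Real.exp (-lam) * (lam * pseq D lam h) ^ D / (Nat.factorial D) := by
          rw [hcLdef, mul_pow]; ring
      _ ≤ Real.exp (-(lam * pseq D lam h)) * (lam * pseq D lam h) ^ D / (Nat.factorial D) := by
          gcongr
      _ ≤ psi D (lam * pseq D lam h) := psi_ge D hμ
  -- the constant `u` absorbing `lam ^ D` in the upper bound
  set u : ℝ := max 0 ((D:ℝ) * Real.log lam / ((D:ℝ) - 1)) with hudef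
  have hu0 : 0 ≤ u := le_max_left _ _
  have huprop : (D:ℝ) * Real.log lam ≤ ((D:ℝ) - 1) * u := by
    have h1 : (D:ℝ) * Real.log lam / ((D:ℝ) - 1) ≤ u := le_max_right _ _
    calc (D:ℝ) * Real.log lam
        = ((D:ℝ) - 1) * ((D:ℝ) * Real.log lam / ((D:ℝ) - 1)) := by field_simp
      _ ≤ ((D:ℝ) - 1) * u := mul_le_mul_of_nonneg_left h1 hDm1.le
  -- choose `h₀`
  have hev : ∀ᶠ h in atTop, pseq D lam h < Real.exp (-u - 1) :=
    htend.eventually_lt_const (Real.exp_pos _)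
  obtain ⟨N, hN⟩ := Filter.eventually_atTop.mp hev
  set h₀ : ℕ := max N 1 with hh₀def
  have hh₀1 : 1 ≤ h₀ := le_max_right _ _
  have hlogP : Real.log (pseq D lam h₀) ≤ -u - 1 :=
    (Real.log_le_iff_le_exp (hPpos h₀)).mpr (hN h₀ (le_max_left _ _)).le
  have hDpow : ∀ k : ℕ, (0:ℝ) < (D:ℝ) ^ k := fun k => by positivity
  set a : ℝ := (-Real.log (pseq D lam h₀) - u) / (D:ℝ) ^ h₀ with hadef
  have ha : 0 < a := div_pos (by linarith) (hDpow h₀)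
  have haD : a * (D:ℝ) ^ h₀ = -Real.log (pseq D lam h₀) - u := by
    rw [hadef]; field_simp
  -- powers of exponentials
  have hexppow : ∀ y : ℝ, Real.exp y ^ D = Real.exp ((D:ℝ) * y) := fun y =>
    (Real.exp_nat_mul y D).symm
  have hlampow : lam ^ D = Real.exp ((D:ℝ) * Real.log lam) := by
    rw [Real.exp_nat_mul, Real.exp_log hlam]
  have hpowsucc : ∀ k : ℕ, (D:ℝ) ^ (k + 1) = (D:ℝ) * (D:ℝ) ^ k := fun k => by ring
  -- upper bound by induction
  have hUP : ∀ k : ℕ, pseq D lam (h₀ + k) ≤ Real.exp (-u - a * (D:ℝ) ^ (h₀ + k)) := by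
    intro k
    induction k with
    | zero =>
      simp only [Nat.add_zero]
      have : -u - a * (D:ℝ) ^ h₀ = Real.log (pseq D lam h₀) := by
        rw [haD]; ring
      rw [this, Real.exp_log (hPpos h₀)]
    | succ k ih =>
      have hh : 1 ≤ h₀ + k := le_trans hh₀1 (Nat.le_add_right _ _)
      have step := hup (h₀ + k) hh
      have hmid : lam ^ D * pseq D lam (h₀ + k) ^ D
          ≤ lam ^ D * (Real.exp (-u - a * (D:ℝ) ^ (h₀ + k))) ^ D := by
        gcongr
        exact (hPpos _).le
      have hfin : lam ^ D * (Real.exp (-u - a * (D:ℝ) ^ (h₀ + k))) ^ D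
          ≤ Real.exp (-u - a * (D:ℝ) ^ (h₀ + (k + 1))) := by
        rw [hlampow, hexppow, ← Real.exp_add]
        apply Real.exp_le_exp.mpr
        have h1 : (D:ℝ) ^ (h₀ + (k + 1)) = (D:ℝ) * (D:ℝ) ^ (h₀ + k) := by
          rw [show h₀ + (k + 1) = (h₀ + k) + 1 by ring, hpowsucc]
        rw [h1]
        nlinarith [huprop, hu0, hDm1]
      have : pseq D lam (h₀ + (k + 1)) = pseq D lam ((h₀ + k) + 1) := by ring_nf
      rw [this]
      exact le_trans step (le_trans hmid hfin)
  -- the constant `v` absorbing `cL` in the lower bound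
  set v : ℝ := min 0 (Real.log cL / ((D:ℝ) - 1)) with hvdef
  have hv0 : v ≤ 0 := min_le_left _ _
  have hvprop : ((D:ℝ) - 1) * v ≤ Real.log cL := by
    have h1 : v ≤ Real.log cL / ((D:ℝ) - 1) := min_le_right _ _
    calc ((D:ℝ) - 1) * v ≤ ((D:ℝ) - 1) * (Real.log cL / ((D:ℝ) - 1)) :=
          mul_le_mul_of_nonneg_left h1 hDm1.le
      _ = Real.log cL := by field_simp
  set b : ℝ := max a ((-v - Real.log (pseq D lam h₀)) / (D:ℝ) ^ h₀) with hbdef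
  have hab : a ≤ b := le_max_left _ _
  have hbase : -v - b * (D:ℝ) ^ h₀ ≤ Real.log (pseq D lam h₀) := by
    have h1 : (-v - Real.log (pseq D lam h₀)) / (D:ℝ) ^ h₀ ≤ b := le_max_right _ _
    have h2 : -v - Real.log (pseq D lam h₀) ≤ b * (D:ℝ) ^ h₀ := by
      rw [div_le_iff₀ (hDpow h₀)] at h1
      linarith
    linarith
  have hcLlog : cL = Real.exp (Real.log cL) := (Real.exp_log hcLpos).symm
  -- lower bound by induction
  have hLOW : ∀ k : ℕ, Real.exp (-v - b * (D:ℝ) ^ (h₀ + k)) ≤ pseq D lam (h₀ + k) := by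
    intro k
    induction k with
    | zero =>
      simp only [Nat.add_zero]
      calc Real.exp (-v - b * (D:ℝ) ^ h₀) ≤ Real.exp (Real.log (pseq D lam h₀)) :=
            Real.exp_le_exp.mpr hbase
        _ = pseq D lam h₀ := Real.exp_log (hPpos h₀)
    | succ k ih =>
      have hh : 1 ≤ h₀ + k := le_trans hh₀1 (Nat.le_add_right _ _)
      have step := hlow (h₀ + k) hh
      have hmid : cL * (Real.exp (-v - b * (D:ℝ) ^ (h₀ + k))) ^ D
          ≤ cL * pseq D lam (h₀ + k) ^ D :=
        mul_le_mul_of_nonneg_left (pow_le_pow_left₀ (Real.exp_pos _).le ih D) hcLpos.le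
      have hfin : Real.exp (-v - b * (D:ℝ) ^ (h₀ + (k + 1)))
          ≤ cL * (Real.exp (-v - b * (D:ℝ) ^ (h₀ + k))) ^ D := by
        rw [hexppow, hcLlog, ← Real.exp_add]
        apply Real.exp_le_exp.mpr
        have h1 : (D:ℝ) ^ (h₀ + (k + 1)) = (D:ℝ) * (D:ℝ) ^ (h₀ + k) := by
          rw [show h₀ + (k + 1) = (h₀ + k) + 1 by ring, hpowsucc]
        rw [h1]
        nlinarith [hvprop, hv0, hDm1]
      have heq : pseq D lam (h₀ + (k + 1)) = pseq D lam ((h₀ + k) + 1) := by ring_nf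
      rw [heq]
      exact le_trans hfin (le_trans hmid step)
  refine ⟨a, b, h₀, ha, hab, hh₀1, fun h hh => ?_⟩
  obtain ⟨k, rfl⟩ : ∃ k, h = h₀ + k := ⟨h - h₀, by omega⟩
  have hb0 : -(b * (D:ℝ) ^ (h₀ + k)) ≤ -v - b * (D:ℝ) ^ (h₀ + k) := by linarith
  have ha0 : -u - a * (D:ℝ) ^ (h₀ + k) ≤ -(a * (D:ℝ) ^ (h₀ + k)) := by linarith
  exact ⟨le_trans (Real.exp_le_exp.mpr hb0) (hLOW k),
    le_trans (hUP k) (Real.exp_le_exp.mpr ha0)⟩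

end PlantedStructures
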